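/- Let α > 0 and let (a,b) ⊆ ℝ be an open interval. If F is an indefinite MC^α integral of f on (a,b), then F is differentiable at x with F′(x) = f(x) for (Lebesgue) almost every x ∈ (a,b). -/

import Mathlib

open Filter Set Topology MeasureTheory

/-- `φ` is an `α`-control function for the pair `(F, f)` on the interval `I`:
`φ` is strictly increasing on `I` and for every `x ∈ I`,
`(F y - F x - f x (y - x)) / (φ (x + α (y - x)) - φ x) → 0` as `y → x` within `I \ {x}`. -/
def IsControlFn (α : ℝ) (I : Set ℝ) (F f φ : ℝ → ℝ) : Prop :=
  StrictMonoOn φ I ∧ ∀ x ∈ I,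
    Tendsto (fun y => (F y - F x - f x * (y - x)) / (φ (x + α * (y - x)) - φ x))
      (𝓝[I \ {x}] x) (𝓝 0)

/-- `F` is an indefinite `MC^α` integral of `f` on `I`. -/
def IsMCIntegral (α : ℝ) (I : Set ℝ) (F f : ℝ → ℝ) : Prop :=
  ∃ φ : ℝ → ℝ, IsControlFn α I F f φ

/-- An indefinite `MC^α` integral `F` of `f` satisfies `F' = f` almost everywhere. -/
theorem stmt_3 (α : ℝ) (hα : 0 < α) (a b : ℝ) (F f : ℝ → ℝ)
    (hF : IsMCIntegral α (Set.Ioo a b) F f) :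
    ∀ᵐ x ∂(volume.restrict (Set.Ioo a b)), HasDerivAt F (f x) x := by
  obtain ⟨φ, hφmono, hφlim⟩ := hF
  filter_upwards [hφmono.monotoneOn.ae_differentiableWithinAt measurableSet_Ioo,
    ae_restrict_mem measurableSet_Ioo] with x hxd hxI
  have hIopen : IsOpen (Set.Ioo a b) := isOpen_Ioo
  have hInhds : Set.Ioo a b ∈ 𝓝 x := hIopen.mem_nhds hxI
  have hφdiff : DifferentiableAt ℝ φ x := hxd.differentiableAt hInhds
  set d := deriv φ x with hd
  have hφd : HasDerivAt φ d x := hφdiff.hasDerivAt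
  -- derivative of y ↦ φ (x + α * (y - x)) at x is d * α
  have h1 : HasDerivAt (fun y : ℝ => x + α * (y - x)) α x := by
    simpa using (((hasDerivAt_id x).sub_const x).const_mul α).const_add x
  have hg : HasDerivAt (fun y : ℝ => φ (x + α * (y - x))) (d * α) x := by
    have hφd' : HasDerivAt φ d (x + α * (x - x)) := by
      rw [show x + α * (x - x) = x by ring]; exact hφd
    exact HasDerivAt.comp x hφd' h1
  have hgslope : Tendsto (fun y => (φ (x + α * (y - x)) - φ x) / (y - x))
      (𝓝[≠] x) (𝓝 (d * α)) := by
    have h := hasDerivAt_iff_tendsto_slope.mp hg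
    refine h.congr fun y => ?_
    simp [slope_def_field]
  -- the two filters agree
  have hfilt : 𝓝[Set.Ioo a b \ {x}] x = 𝓝[≠] x := by
    rw [diff_eq]
    exact nhdsWithin_inter_of_mem (mem_nhdsWithin_of_mem_nhds hInhds)
  have hlim : Tendsto (fun y => (F y - F x - f x * (y - x)) / (φ (x + α * (y - x)) - φ x))
      (𝓝[≠] x) (𝓝 0) := hfilt ▸ hφlim x hxI
  -- eventually the denominator is nonzero
  have hev : ∀ᶠ y in 𝓝[≠] x, φ (x + α * (y - x)) - φ x ≠ 0 ∧ y ≠ x := by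
    have hmem : ∀ᶠ y in 𝓝 x, x + α * (y - x) ∈ Set.Ioo a b := by
      have hc : ContinuousAt (fun y : ℝ => x + α * (y - x)) x := by fun_prop
      exact hc (by simpa using hInhds)
    filter_upwards [eventually_nhdsWithin_of_eventually_nhds hmem, self_mem_nhdsWithin]
      with y hy hyx
    have hyx' : y ≠ x := hyx
    refine ⟨fun h0 => ?_, hyx'⟩
    have : x + α * (y - x) = x := hφmono.injOn hy hxI (by linarith [sub_eq_zero.mp h0])
    have : α * (y - x) = 0 := by linarith
    rcases mul_eq_zero.mp this with h | h
    · exact absurd h (ne_of_gt hα)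
    · exact hyx' (by linarith [sub_eq_zero.mp h])
  -- slope of F tends to f x
  have hslope : Tendsto (fun y => (F y - F x) / (y - x) - f x) (𝓝[≠] x) (𝓝 0) := by
    have hprod := hlim.mul hgslope
    rw [zero_mul] at hprod
    refine hprod.congr' ?_
    filter_upwards [hev] with y ⟨hden, hyx⟩
    have hysub : y - x ≠ 0 := sub_ne_zero.mpr hyx
    generalize φ (x + α * (y - x)) - φ x = u at hden ⊢
    field_simp
  rw [hasDerivAt_iff_tendsto_slope]
  have := tendsto_sub_nhds_zero_iff.mp hslope
  refine this.congr fun y => ?_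
  simp [slope_def_field]
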